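/- For two unrelated machines, the sequential price of stability is at most n/2 + 1: for every instance P on 2 machines and n jobs there exists an order σ of the players such that every subgame perfect equilibrium of the sequential game with order σ has makespan at most (n/2 + 1)·OPT(P). -/

import Mathlib

open Classical Finset

noncomputable section

/-- Load of machine `i` given the list `s` of machine choices of jobs `0, 1, …`. -/
def mLoad (P : ℕ → Fin 2 → ℝ) (s : List (Fin 2)) (i : Fin 2) : ℝ :=
  ∑ j ∈ Finset.range s.length, if s.getD j 0 = i then P j i else 0

/-- Makespan of a full list of choices. -/
def lMk (P : ℕ → Fin 2 → ℝ) (s : List (Fin 2)) : ℝ :=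
  max (mLoad P s 0) (mLoad P s 1)

/-- Extend the history `h` to a full play of the `n`-player sequential game by
following the strategy profile `σ`. -/
def play (σ : List (Fin 2) → Fin 2) (n : ℕ) (h : List (Fin 2)) : List (Fin 2) :=
  if hl : n ≤ h.length then h else play σ n (h ++ [σ h])
termination_by n - h.length
decreasing_by simp [List.length_append]; omega

/-- `σ` is a subgame perfect equilibrium of the `n`-player sequential game on
instance `P` (players move in order `0, …, n − 1`; at every history, the moving
player cannot improve the final load of her own machine by deviating). -/
def IsSPE (P : ℕ → Fin 2 → ℝ) (n : ℕ) (σ : List (Fin 2) → Fin 2) : Prop :=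
  ∀ h : List (Fin 2), h.length < n → ∀ c : Fin 2,
    mLoad P (play σ n (h ++ [σ h])) (σ h) ≤ mLoad P (play σ n (h ++ [c])) c

/-- Load of machine `i` under schedule `s` for the first `n` jobs. -/
def fLoad (P : ℕ → Fin 2 → ℝ) (n : ℕ) (s : ℕ → Fin 2) (i : Fin 2) : ℝ :=
  ∑ j ∈ Finset.range n, if s j = i then P j i else 0

/-- Makespan of schedule `s`. -/
def fMk (P : ℕ → Fin 2 → ℝ) (n : ℕ) (s : ℕ → Fin 2) : ℝ :=
  max (fLoad P n s 0) (fLoad P n s 1)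

/-- Optimal makespan. -/
def optMk (P : ℕ → Fin 2 → ℝ) (n : ℕ) : ℝ := ⨅ s : ℕ → Fin 2, fMk P n s

/-- The instance `P` with the jobs reordered according to the permutation `σ`:
the `j`-th player to move is job `σ(j)`. -/
def permP (n : ℕ) (P : ℕ → Fin 2 → ℝ) (σ : Equiv.Perm (Fin n)) : ℕ → Fin 2 → ℝ :=
  fun j i => if h : j < n then P ((σ ⟨j, h⟩ : Fin n) : ℕ) i else 0

-- ## Infrastructure

lemma fin2_resolve : ∀ (α β c : Fin 2), α ≠ β → c = α ∨ c = β := by decide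

lemma fin2_pair : ∀ (α β : Fin 2), α ≠ β → (α = 0 ∧ β = 1) ∨ (α = 1 ∧ β = 0) := by decide

lemma mLoad_nil (P : ℕ → Fin 2 → ℝ) (i : Fin 2) : mLoad P [] i = 0 := by
  simp [mLoad]

lemma mLoad_append (P : ℕ → Fin 2 → ℝ) (h : List (Fin 2)) (c i : Fin 2) :
    mLoad P (h ++ [c]) i = mLoad P h i + if c = i then P h.length i else 0 := by
  unfold mLoad
  rw [List.length_append, List.length_singleton, Finset.sum_range_succ]
  congr 1
  · exact Finset.sum_congr rfl fun j hj => by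
      rw [List.getD_append _ _ _ _ (Finset.mem_range.mp hj)]
  · rw [List.getD_append_right _ _ _ _ le_rfl]
    simp

lemma mLoad_nonneg {P : ℕ → Fin 2 → ℝ} (hP : ∀ j i, 0 ≤ P j i) (h : List (Fin 2)) (i : Fin 2) :
    0 ≤ mLoad P h i := by
  apply Finset.sum_nonneg
  intro j _
  split
  · exact hP j i
  · exact le_refl 0

lemma play_of_le (σ : List (Fin 2) → Fin 2) (n : ℕ) (h : List (Fin 2)) (hl : n ≤ h.length) :
    play σ n h = h := by
  rw [play]; simp [hl]

lemma play_step (σ : List (Fin 2) → Fin 2) (n : ℕ) (h : List (Fin 2)) (hl : h.length < n) :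
    play σ n h = play σ n (h ++ [σ h]) := by
  conv_lhs => rw [play]
  rw [dif_neg (not_le.mpr hl)]

lemma mLoad_le_play_aux {P : ℕ → Fin 2 → ℝ} (hP : ∀ j i, 0 ≤ P j i)
    (σ : List (Fin 2) → Fin 2) (n : ℕ) :
    ∀ (d : ℕ) (h : List (Fin 2)) (i : Fin 2), n ≤ h.length + d →
      mLoad P h i ≤ mLoad P (play σ n h) i := by
  intro d
  induction d with
  | zero =>
    intro h i hle
    rw [play_of_le σ n h (by omega)]
  | succ d ih =>
    intro h i hle
    by_cases hl : n ≤ h.length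
    · rw [play_of_le σ n h hl]
    · rw [play_step σ n h (by omega)]
      refine le_trans ?_ (ih (h ++ [σ h]) i (by simp; omega))
      rw [mLoad_append]
      have : (0:ℝ) ≤ if σ h = i then P h.length i else 0 := by
        split
        · exact hP _ _
        · exact le_refl 0
      linarith

lemma mLoad_le_play {P : ℕ → Fin 2 → ℝ} (hP : ∀ j i, 0 ≤ P j i)
    (σ : List (Fin 2) → Fin 2) (n : ℕ) (h : List (Fin 2)) (i : Fin 2) :
    mLoad P h i ≤ mLoad P (play σ n h) i :=
  mLoad_le_play_aux hP σ n n h i (by omega)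

section MainLemmas

variable {P : ℕ → Fin 2 → ℝ} {n k : ℕ} {τ : List (Fin 2) → Fin 2} {α β : Fin 2}

lemma lem1a (hP : ∀ j i, 0 ≤ P j i) :
    ∀ (d : ℕ) (h : List (Fin 2)), n ≤ h.length + d →
      mLoad P (play τ n h) β ≤ mLoad P h β + ∑ j ∈ Finset.Ico h.length n, P j β := by
  intro d
  induction d with
  | zero =>
    intro h hle
    rw [play_of_le τ n h (by omega)]
    have : (0:ℝ) ≤ ∑ j ∈ Finset.Ico h.length n, P j β :=
      Finset.sum_nonneg fun j _ => hP j β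
    linarith
  | succ d ih =>
    intro h hle
    by_cases hl : n ≤ h.length
    · rw [play_of_le τ n h hl]
      have : (0:ℝ) ≤ ∑ j ∈ Finset.Ico h.length n, P j β :=
        Finset.sum_nonneg fun j _ => hP j β
      linarith
    · have hlt : h.length < n := by omega
      rw [play_step τ n h hlt]
      have h2 := ih (h ++ [τ h]) (by simp; omega)
      rw [mLoad_append] at h2
      rw [Finset.sum_eq_sum_Ico_succ_bot hlt]
      simp only [List.length_append, List.length_singleton] at h2
      have hite : (if τ h = β then P h.length β else 0) ≤ P h.length β := by
        split
        · exact le_refl _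
        · exact hP _ _
      linarith

lemma lem1b (hP : ∀ j i, 0 ≤ P j i) (hαβ : α ≠ β) (hτ : IsSPE P n τ) :
    ∀ (d : ℕ) (h : List (Fin 2)), n ≤ h.length + d →
      mLoad P (play τ n h) α ≤
        max (mLoad P h α) (mLoad P h β + ∑ j ∈ Finset.Ico h.length n, P j β) := by
  intro d
  induction d with
  | zero =>
    intro h hle
    rw [play_of_le τ n h (by omega)]
    exact le_max_left _ _
  | succ d ih =>
    intro h hle
    by_cases hl : n ≤ h.length
    · rw [play_of_le τ n h hl]; exact le_max_left _ _
    · have hlt : h.length < n := by omega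
      rcases fin2_resolve α β (τ h) hαβ with hc | hc
      · -- mover picks α: use SPE deviation to β
        have hspe := hτ h hlt β
        rw [hc] at hspe
        have heq : mLoad P (play τ n h) α = mLoad P (play τ n (h ++ [α])) α := by
          rw [play_step τ n h hlt, hc]
        rw [heq]
        refine le_trans hspe (le_trans (lem1a hP n (h ++ [β]) (by omega)) ?_)
        rw [mLoad_append, if_pos rfl]
        simp only [List.length_append, List.length_singleton]
        rw [add_assoc, ← Finset.sum_eq_sum_Ico_succ_bot (f := fun j => P j β) hlt]
        exact le_max_right _ _
      · -- mover picks β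
        rw [play_step τ n h hlt, hc]
        refine le_trans (ih (h ++ [β]) (by simp; omega)) ?_
        rw [mLoad_append, mLoad_append, if_pos rfl, if_neg (Ne.symm hαβ), add_zero]
        simp only [List.length_append, List.length_singleton]
        rw [add_assoc, ← Finset.sum_eq_sum_Ico_succ_bot (f := fun j => P j β) hlt]

lemma lem2 (hP : ∀ j i, 0 ≤ P j i) (hαβ : α ≠ β) (hτ : IsSPE P n τ) (hkn : k ≤ n) :
    ∀ (d : ℕ) (h : List (Fin 2)), k ≤ h.length + d → h.length ≤ k →
      mLoad P (play τ n h) α ≤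
        max (mLoad P h α + ∑ j ∈ Finset.Ico h.length k, P j α)
            (mLoad P (play τ n h) β + ∑ j ∈ Finset.Ico k n, P j β) := by
  have base : ∀ h : List (Fin 2), h.length = k →
      mLoad P (play τ n h) α ≤
        max (mLoad P h α + ∑ j ∈ Finset.Ico h.length k, P j α)
            (mLoad P (play τ n h) β + ∑ j ∈ Finset.Ico k n, P j β) := by
    intro h hk
    have h1 := lem1b hP hαβ hτ n h (by omega)
    rw [hk] at h1
    rw [hk, Finset.Ico_self, Finset.sum_empty, add_zero]
    exact h1.trans (max_le_max le_rfl (add_le_add_left (mLoad_le_play hP τ n h β) _))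
  intro d
  induction d with
  | zero =>
    intro h hd hlen
    exact base h (by omega)
  | succ d ih =>
    intro h hd hlen
    by_cases hl : h.length < k
    · have hlt : h.length < n := lt_of_lt_of_le hl hkn
      rw [play_step τ n h hlt]
      refine (ih (h ++ [τ h]) (by simp; omega) (by simp; omega)).trans ?_
      apply max_le_max
      · rw [mLoad_append]
        simp only [List.length_append, List.length_singleton]
        rw [Finset.sum_eq_sum_Ico_succ_bot (f := fun j => P j α) hl]
        have hite : (if τ h = α then P h.length α else 0) ≤ P h.length α := by
          split
          · exact le_refl _
          · exact hP _ _
        linarith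
      · exact le_refl _
    · exact base h (by omega)

lemma lem3 (hP : ∀ j i, 0 ≤ P j i) (hαβ : α ≠ β) (hτ : IsSPE P n τ) (hkn : k ≤ n) :
    ∀ (m : ℕ) (h : List (Fin 2)), h.length + m = k →
      mLoad P (play τ n h) β ≤
        max (mLoad P h α + ∑ j ∈ Finset.Ico h.length k, P j α
              + ((m - 1 : ℕ) : ℝ) * ∑ j ∈ Finset.Ico k n, P j β)
            (mLoad P h β + ((max m 1 : ℕ) : ℝ) * ∑ j ∈ Finset.Ico k n, P j β) := by
  have hB0 : (0:ℝ) ≤ ∑ j ∈ Finset.Ico k n, P j β :=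
    Finset.sum_nonneg fun j _ => hP j β
  intro m
  induction m with
  | zero =>
    intro h hk
    simp only [Nat.zero_sub, Nat.cast_zero, zero_mul, add_zero, Nat.max_eq_right (Nat.zero_le 1),
      Nat.cast_one, one_mul]
    have h1 := lem1a (n := n) (τ := τ) (β := β) hP n h (by omega)
    rw [show h.length = k by omega] at h1
    exact h1.trans (le_max_right _ _)
  | succ m ih =>
    intro h hk
    have hl : h.length < k := by omega
    have hlt : h.length < n := lt_of_lt_of_le hl hkn
    rcases fin2_resolve α β (τ h) hαβ with hc | hc
    · -- mover picks α
      rw [play_step τ n h hlt, hc]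
      refine (ih (h ++ [α]) (by simp; omega)).trans ?_
      apply max_le_max
      · rw [mLoad_append, if_pos rfl]
        simp only [List.length_append, List.length_singleton]
        rw [Finset.sum_eq_sum_Ico_succ_bot (f := fun j => P j α) hl]
        have hcast : ((m - 1 : ℕ) : ℝ) ≤ ((m + 1 - 1 : ℕ) : ℝ) := Nat.cast_le.mpr (by omega)
        nlinarith [hB0]
      · rw [mLoad_append, if_neg hαβ, add_zero]
        have hcast : ((max m 1 : ℕ) : ℝ) ≤ ((max (m + 1) 1 : ℕ) : ℝ) := Nat.cast_le.mpr (by omega)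
        nlinarith [hB0]
    · -- mover picks β : SPE deviation to α
      have hstep : mLoad P (play τ n h) β = mLoad P (play τ n (h ++ [β])) β := by
        rw [play_step τ n h hlt, hc]
      have hspe := hτ h hlt α
      rw [hc] at hspe
      rw [hstep]
      refine hspe.trans ?_
      rcases Nat.eq_zero_or_pos m with hm0 | hmpos
      · -- h.length + 1 = k : use lem1b
        subst hm0
        have hk1 : h.length + 1 = k := by omega
        refine (lem1b hP hαβ hτ n (h ++ [α]) (by omega)).trans ?_
        apply max_le
        · rw [mLoad_append, if_pos rfl]
          refine le_trans ?_ (le_max_left _ _)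
          rw [Finset.sum_eq_sum_Ico_succ_bot (f := fun j => P j α) hl,
            show h.length + 1 = k from hk1, Finset.Ico_self, Finset.sum_empty, add_zero]
          have : ((0 + 1 - 1 : ℕ) : ℝ) * ∑ j ∈ Finset.Ico k n, P j β = 0 := by norm_num
          linarith
        · rw [mLoad_append, if_neg hαβ, add_zero]
          simp only [List.length_append, List.length_singleton, hk1]
          refine le_trans ?_ (le_max_right _ _)
          have : ((max (0 + 1) 1 : ℕ) : ℝ) = 1 := by norm_num
          rw [this]
          linarith
      · -- m ≥ 1 : use lem2 and ih at h ++ [α]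
        have h2 := lem2 hP hαβ hτ hkn k (h ++ [α])
          (by rw [List.length_append, List.length_singleton]; omega)
          (by rw [List.length_append, List.length_singleton]; omega)
        have h3 := ih (h ++ [α]) (by rw [List.length_append, List.length_singleton]; omega)
        rw [mLoad_append, if_pos rfl] at h2
        rw [mLoad_append, if_pos rfl, mLoad_append, if_neg hαβ, add_zero] at h3
        simp only [List.length_append, List.length_singleton] at h2 h3
        set B := ∑ j ∈ Finset.Ico k n, P j β with hB
        set X := mLoad P h α + P h.length α + ∑ j ∈ Finset.Ico (h.length + 1) k, P j α with hX
        have c1 : ((m - 1 : ℕ) : ℝ) = (m : ℝ) - 1 := by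
          rw [Nat.cast_sub hmpos, Nat.cast_one]
        have c2 : ((m ⊔ 1 : ℕ) : ℝ) = (m : ℝ) := by rw [Nat.max_eq_left hmpos]
        have c3 : ((m + 1 - 1 : ℕ) : ℝ) = (m : ℝ) := by norm_num
        have c4 : (((m + 1) ⊔ 1 : ℕ) : ℝ) = (m : ℝ) + 1 := by
          rw [Nat.max_eq_left (by omega : 1 ≤ m + 1)]
          push_cast
          ring
        rw [Finset.sum_eq_sum_Ico_succ_bot (f := fun j => P j α) hl, c3, c4]
        rw [c1, c2] at h3
        refine h2.trans ?_
        apply max_le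
        · refine le_trans ?_ (le_max_left _ _)
          rw [hX]
          have h0 : (0:ℝ) ≤ (m:ℝ) * B := mul_nonneg (Nat.cast_nonneg m) hB0
          linarith
        · refine le_trans (add_le_add_left h3 B) ?_
          rw [← max_add_add_right]
          apply max_le
          · refine le_trans ?_ (le_max_left _ _)
            rw [hX]
            linarith
          · refine le_trans ?_ (le_max_right _ _)
            linarith

lemma main_bound (hP : ∀ j i, 0 ≤ P j i) (hαβ : α ≠ β) (hτ : IsSPE P n τ) (hkn : k ≤ n)
    (T : ℝ) (hT : 0 ≤ T)
    (hA : ∑ j ∈ Finset.Ico 0 k, P j α ≤ T)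
    (hB : ∑ j ∈ Finset.Ico k n, P j β ≤ T) :
    lMk P (play τ n []) ≤ ((k : ℝ) + 1) * T := by
  have hB0 : (0:ℝ) ≤ ∑ j ∈ Finset.Ico k n, P j β := Finset.sum_nonneg fun j _ => hP j β
  have hk1 : (1:ℝ) ≤ (k:ℝ) + 1 := by
    have : (0:ℝ) ≤ (k:ℝ) := Nat.cast_nonneg k
    linarith
  have hmain : mLoad P (play τ n []) α ≤ ((k:ℝ)+1) * T ∧
      mLoad P (play τ n []) β ≤ ((k:ℝ)+1) * T := by
    rcases Nat.eq_zero_or_pos k with hk0 | hkpos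
    · subst hk0
      have h1 := lem1a (n := n) (τ := τ) (β := β) hP n [] (by simp)
      have h2 := lem1b hP hαβ hτ n [] (by simp)
      rw [mLoad_nil] at h1
      rw [mLoad_nil, mLoad_nil] at h2
      simp only [List.length_nil] at h1 h2
      constructor
      · refine h2.trans ?_
        have : (0:ℝ) ≤ T := hT
        refine max_le (by nlinarith) ?_
        rw [zero_add]
        nlinarith [hB.trans_eq (one_mul T).symm]
      · refine h1.trans ?_
        rw [zero_add]
        nlinarith
    · have hkR : (1:ℝ) ≤ (k:ℝ) := by exact_mod_cast hkpos
      have c1 : ((k - 1 : ℕ) : ℝ) = (k : ℝ) - 1 := by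
        rw [Nat.cast_sub hkpos, Nat.cast_one]
      have c2 : ((k ⊔ 1 : ℕ) : ℝ) = (k : ℝ) := by rw [Nat.max_eq_left hkpos]
      have h3 := lem3 hP hαβ hτ hkn k [] (by simp)
      rw [mLoad_nil, mLoad_nil, c1, c2] at h3
      simp only [List.length_nil, zero_add] at h3
      have hFβ : mLoad P (play τ n []) β ≤ (k:ℝ) * T := by
        refine h3.trans (max_le ?_ ?_)
        · have := mul_le_mul_of_nonneg_left hB (by linarith : (0:ℝ) ≤ (k:ℝ) - 1)
          linarith
        · have := mul_le_mul_of_nonneg_left hB (by linarith : (0:ℝ) ≤ (k:ℝ))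
          linarith
      have h2 := lem2 hP hαβ hτ hkn k [] (by simp) (by simp)
      rw [mLoad_nil] at h2
      simp only [List.length_nil, zero_add] at h2
      constructor
      · refine h2.trans (max_le ?_ ?_)
        · nlinarith
        · nlinarith
      · nlinarith
  rcases fin2_pair α β hαβ with ⟨ha, hb⟩ | ⟨ha, hb⟩
  · subst ha; subst hb
    exact max_le hmain.1 hmain.2
  · subst ha; subst hb
    exact max_le hmain.2 hmain.1

end MainLemmas

-- ## Optimal schedule and permutation

lemma fLoad_nonneg {P : ℕ → Fin 2 → ℝ} (hP : ∀ j i, 0 ≤ P j i) (n : ℕ) (s : ℕ → Fin 2)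
    (i : Fin 2) : 0 ≤ fLoad P n s i := by
  apply Finset.sum_nonneg
  intro j _
  split
  · exact hP j i
  · exact le_refl 0

lemma fMk_nonneg {P : ℕ → Fin 2 → ℝ} (hP : ∀ j i, 0 ≤ P j i) (n : ℕ) (s : ℕ → Fin 2) :
    0 ≤ fMk P n s :=
  le_trans (fLoad_nonneg hP n s 0) (le_max_left _ _)

lemma fin2_eq01 : ∀ i : Fin 2, i = 0 ∨ i = 1 := by decide

lemma fin2_ne0 : ∀ c : Fin 2, (¬ c = 0) ↔ c = 1 := by decide

lemma fLoad_le_fMk {P : ℕ → Fin 2 → ℝ} (n : ℕ) (s : ℕ → Fin 2) (i : Fin 2) :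
    fLoad P n s i ≤ fMk P n s := by
  rcases fin2_eq01 i with hi | hi <;> subst hi
  · exact le_max_left _ _
  · exact le_max_right _ _

lemma fLoad_congr {P : ℕ → Fin 2 → ℝ} {n : ℕ} {s s' : ℕ → Fin 2}
    (hss : ∀ j < n, s j = s' j) (i : Fin 2) : fLoad P n s i = fLoad P n s' i :=
  Finset.sum_congr rfl fun j hj => by rw [hss j (Finset.mem_range.mp hj)]

lemma optMk_exists (P : ℕ → Fin 2 → ℝ) (n : ℕ) (hP : ∀ j i, 0 ≤ P j i) :
    ∃ s₀ : ℕ → Fin 2, fMk P n s₀ = optMk P n := by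
  obtain ⟨v₀, hv₀⟩ := Finite.exists_min (fun v : Fin n → Fin 2 =>
    fMk P n (fun j => if h : j < n then v ⟨j, h⟩ else 0))
  refine ⟨(fun j => if h : j < n then v₀ ⟨j, h⟩ else 0), le_antisymm ?_ ?_⟩
  · apply le_ciInf
    intro s
    refine (hv₀ (fun i => s i)).trans (le_of_eq ?_)
    unfold fMk
    congr 1 <;>
      exact fLoad_congr (fun j hj => by simp [hj]) _
  · refine ciInf_le ⟨0, ?_⟩ _
    rintro x ⟨s, rfl⟩
    exact fMk_nonneg hP n s

lemma build (n : ℕ) (P : ℕ → Fin 2 → ℝ) (hP : ∀ j i, 0 ≤ P j i) (s₀ : ℕ → Fin 2)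
    (α β : Fin 2) (hαβ : α ≠ β)
    (hhalf : 2 * (Finset.univ.filter (fun j : Fin n => s₀ (j:ℕ) = α)).card ≤ n) :
    ∃ σ : Equiv.Perm (Fin n),
      ∀ τ : List (Fin 2) → Fin 2, IsSPE (permP n P σ) n τ →
        lMk (permP n P σ) (play τ n []) ≤ ((n:ℝ)/2 + 1) * fMk P n s₀ := by
  classical
  set k := (Finset.univ.filter (fun j : Fin n => s₀ (j:ℕ) = α)).card with hk
  have hkn : k ≤ n := by
    rw [hk]
    exact le_trans (Finset.card_filter_le _ _) (by simp)
  set f : Fin n → ℕ := fun j => if s₀ (j:ℕ) = α then 0 else 1 with hf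
  set σ := Tuple.sort f with hσ
  have hmono : Monotone (f ∘ σ) := Tuple.monotone_sort f
  have hf0 : ∀ j : Fin n, (f j = 0 ↔ s₀ (j:ℕ) = α) := by
    intro j
    rw [hf]
    dsimp only
    split
    · exact iff_of_true rfl (by assumption)
    · exact iff_of_false one_ne_zero (by assumption)
  have hcard2 : (Finset.univ.filter (fun j : Fin n => f (σ j) = 0)).card = k := by
    have e1 : (Finset.univ.filter (fun j : Fin n => f (σ j) = 0))
        = (Finset.univ.filter (fun j : Fin n => s₀ ((σ j : Fin n):ℕ) = α)) := by
      apply Finset.filter_congr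
      intro j _
      simp only [hf0 (σ j)]
    rw [e1, hk]
    apply Finset.card_bij (fun a _ => σ a)
    · intro a ha
      simp only [Finset.mem_filter, Finset.mem_univ, true_and] at ha ⊢
      exact ha
    · intro a _ b _ hab
      exact σ.injective hab
    · intro b hb
      simp only [Finset.mem_filter, Finset.mem_univ, true_and] at hb
      exact ⟨σ.symm b, by simp [hb], by simp⟩
  have hkey : ∀ j : Fin n, ((j:ℕ) < k ↔ f (σ j) = 0) := by
    intro j
    constructor
    · intro hj
      by_contra hne
      have hsub : (Finset.univ.filter (fun i : Fin n => f (σ i) = 0)) ⊆ Finset.Iio j := by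
        intro i hi
        simp only [Finset.mem_filter, Finset.mem_univ, true_and] at hi
        rw [Finset.mem_Iio]
        by_contra hij
        have hji : j ≤ i := le_of_not_gt hij
        have := hmono hji
        simp only [Function.comp_apply] at this
        rw [hi] at this
        exact hne (Nat.le_zero.mp this)
      have hcc := Finset.card_le_card hsub
      rw [hcard2, Fin.card_Iio] at hcc
      omega
    · intro h0
      have hsub : Finset.Iic j ⊆ Finset.univ.filter (fun i : Fin n => f (σ i) = 0) := by
        intro i hi
        simp only [Finset.mem_Iic] at hi
        have := hmono hi
        simp only [Function.comp_apply] at this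
        rw [h0] at this
        simp only [Finset.mem_filter, Finset.mem_univ, true_and]
        exact Nat.le_zero.mp this
      have hcc := Finset.card_le_card hsub
      rw [hcard2, Fin.card_Iic] at hcc
      omega
  have hkey' : ∀ j : Fin n, ((j:ℕ) < k ↔ s₀ ((σ j : Fin n):ℕ) = α) := by
    intro j
    rw [hkey j, hf0 (σ j)]
  refine ⟨σ, ?_⟩
  intro τ hτ
  have hP' : ∀ j i, 0 ≤ permP n P σ j i := by
    intro j i
    unfold permP
    split
    · exact hP _ _
    · exact le_refl 0
  -- sum identities
  have hA' : ∑ j ∈ Finset.Ico 0 k, permP n P σ j α = fLoad P n s₀ α := by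
    have e2 : ∀ i : Fin n, (if (i:ℕ) < k then permP n P σ (i:ℕ) α else 0)
        = (if s₀ ((σ i : Fin n):ℕ) = α then P ((σ i : Fin n):ℕ) α else 0) := by
      intro i
      unfold permP
      rw [dif_pos i.isLt]
      by_cases hik : (i:ℕ) < k
      · rw [if_pos hik, if_pos ((hkey' i).mp hik)]
      · rw [if_neg hik, if_neg (fun hcon => hik ((hkey' i).mpr hcon))]
    calc ∑ j ∈ Finset.Ico 0 k, permP n P σ j α
        = ∑ j ∈ Finset.range k, permP n P σ j α := by rw [← Finset.range_eq_Ico]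
      _ = ∑ j ∈ Finset.range k, (if j < k then permP n P σ j α else 0) :=
          Finset.sum_congr rfl fun j hj => (if_pos (Finset.mem_range.mp hj)).symm
      _ = ∑ j ∈ Finset.range n, (if j < k then permP n P σ j α else 0) :=
          Finset.sum_subset (Finset.range_subset_range.mpr hkn)
            (fun x _ hx => if_neg (fun hlt => hx (Finset.mem_range.mpr hlt)))
      _ = ∑ i : Fin n, (if (i:ℕ) < k then permP n P σ (i:ℕ) α else 0) :=
          (Fin.sum_univ_eq_sum_range (fun j => if j < k then permP n P σ j α else 0) n).symm
      _ = ∑ i : Fin n, (fun x : Fin n => if s₀ (x:ℕ) = α then P (x:ℕ) α else 0) (σ i) :=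
          Finset.sum_congr rfl fun i _ => e2 i
      _ = ∑ x : Fin n, (if s₀ (x:ℕ) = α then P (x:ℕ) α else 0) :=
          Equiv.sum_comp σ (fun x : Fin n => if s₀ (x:ℕ) = α then P (x:ℕ) α else 0)
      _ = ∑ j ∈ Finset.range n, (if s₀ j = α then P j α else 0) :=
          Fin.sum_univ_eq_sum_range (fun j => if s₀ j = α then P j α else 0) n
      _ = fLoad P n s₀ α := rfl
  have hB' : ∑ j ∈ Finset.Ico k n, permP n P σ j β = fLoad P n s₀ β := by
    have e2 : ∀ i : Fin n, (if (i:ℕ) < k then 0 else permP n P σ (i:ℕ) β)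
        = (if s₀ ((σ i : Fin n):ℕ) = β then P ((σ i : Fin n):ℕ) β else 0) := by
      intro i
      unfold permP
      rw [dif_pos i.isLt]
      by_cases hik : (i:ℕ) < k
      · rw [if_pos hik]
        have hsa : s₀ ((σ i : Fin n):ℕ) = α := (hkey' i).mp hik
        rw [if_neg (fun hcon => hαβ (by rw [← hsa, hcon]))]
      · rw [if_neg hik]
        have hne : ¬ s₀ ((σ i : Fin n):ℕ) = α := fun hcon => hik ((hkey' i).mpr hcon)
        have hsb : s₀ ((σ i : Fin n):ℕ) = β := by
          rcases fin2_resolve α β (s₀ ((σ i : Fin n):ℕ)) hαβ with hx | hx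
          · exact absurd hx hne
          · exact hx
        rw [if_pos hsb]
    have hsubset : Finset.Ico k n ⊆ Finset.range n := by
      rw [Finset.range_eq_Ico]
      exact Finset.Ico_subset_Ico (Nat.zero_le k) le_rfl
    calc ∑ j ∈ Finset.Ico k n, permP n P σ j β
        = ∑ j ∈ Finset.Ico k n, (if j < k then 0 else permP n P σ j β) :=
          Finset.sum_congr rfl fun j hj =>
            (if_neg (not_lt.mpr (Finset.mem_Ico.mp hj).1)).symm
      _ = ∑ j ∈ Finset.range n, (if j < k then 0 else permP n P σ j β) := by
          refine Finset.sum_subset hsubset (fun x hx hxn => ?_)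
          have : x < k := by
            simp only [Finset.mem_range] at hx
            simp only [Finset.mem_Ico, not_and, not_le] at hxn
            omega
          exact if_pos this
      _ = ∑ i : Fin n, (if (i:ℕ) < k then 0 else permP n P σ (i:ℕ) β) :=
          (Fin.sum_univ_eq_sum_range (fun j => if j < k then 0 else permP n P σ j β) n).symm
      _ = ∑ i : Fin n, (fun x : Fin n => if s₀ (x:ℕ) = β then P (x:ℕ) β else 0) (σ i) :=
          Finset.sum_congr rfl fun i _ => e2 i
      _ = ∑ x : Fin n, (if s₀ (x:ℕ) = β then P (x:ℕ) β else 0) :=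
          Equiv.sum_comp σ (fun x : Fin n => if s₀ (x:ℕ) = β then P (x:ℕ) β else 0)
      _ = ∑ j ∈ Finset.range n, (if s₀ j = β then P j β else 0) :=
          Fin.sum_univ_eq_sum_range (fun j => if s₀ j = β then P j β else 0) n
      _ = fLoad P n s₀ β := rfl
  have hT : (0:ℝ) ≤ fMk P n s₀ := fMk_nonneg hP n s₀
  have hbound := main_bound hP' hαβ hτ hkn (fMk P n s₀) hT
    (by rw [hA']; exact fLoad_le_fMk n s₀ α)
    (by rw [hB']; exact fLoad_le_fMk n s₀ β)
  refine hbound.trans ?_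
  apply mul_le_mul_of_nonneg_right _ hT
  have hcast : (k:ℝ) ≤ (n:ℝ)/2 := by
    have : (2:ℝ) * (k:ℝ) ≤ (n:ℝ) := by exact_mod_cast hhalf
    linarith
  linarith

/-- For two unrelated machines the sequential price of stability is at most
`n/2 + 1`: for every instance there is an order of the players such that every
subgame perfect equilibrium of the sequential game in that order has makespan
at most `(n/2 + 1) · OPT`. -/
theorem spos_le_half_n_plus_one :
    ∀ (n : ℕ) (P : ℕ → Fin 2 → ℝ), (∀ j i, 0 ≤ P j i) →
      ∃ σ : Equiv.Perm (Fin n),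
        ∀ τ : List (Fin 2) → Fin 2, IsSPE (permP n P σ) n τ →
          lMk (permP n P σ) (play τ n []) ≤ ((n : ℝ)/2 + 1) * optMk P n := by
  intro n P hP
  classical
  obtain ⟨s₀, hs₀⟩ := optMk_exists P n hP
  rw [← hs₀]
  by_cases hc : 2 * (Finset.univ.filter (fun j : Fin n => s₀ (j:ℕ) = (0:Fin 2))).card ≤ n
  · exact build n P hP s₀ 0 1 (by decide) hc
  · have hpart := Finset.card_filter_add_card_filter_not
      (s := (Finset.univ : Finset (Fin n))) (p := fun j : Fin n => s₀ (j:ℕ) = (0:Fin 2))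
    have hneg : (Finset.univ.filter (fun j : Fin n => ¬ s₀ (j:ℕ) = (0:Fin 2)))
        = (Finset.univ.filter (fun j : Fin n => s₀ (j:ℕ) = (1:Fin 2))) := by
      apply Finset.filter_congr
      intro j _
      simp only [fin2_ne0 (s₀ (j:ℕ))]
    rw [hneg] at hpart
    simp only [Finset.card_univ, Fintype.card_fin] at hpart
    exact build n P hP s₀ 1 0 (by decide) (by omega)


end
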